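/- Let H ∈ (1/2,1), ρ ≥ 0, k > 0, and B : [0,∞) → ℝ continuous with B_0 = 0. Then the equation Z_t = ρ + B_t + ∫₀^t (k u^{2H−1} / Z_u) du, with Z continuous, Z_t ≥ 0 (and Z_u > 0 for a.e. u so that the integral makes sense and is finite), has at most one solution. -/

import Mathlib

open MeasureTheory Real Set

/-- A nonnegative continuous solution of the singular Bessel-type equation
`Z_t = ρ + B_t + ∫₀^t k u^{2H-1}/Z_u du`. -/
def IsBesselTypeSol (H ρ k : ℝ) (B Z : ℝ → ℝ) : Prop :=
  Continuous Z ∧ (∀ t : ℝ, 0 ≤ Z t) ∧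
    (∀ᵐ u ∂(volume.restrict (Ioi (0:ℝ))), 0 < Z u) ∧
    (∀ t : ℝ, 0 ≤ t → IntegrableOn (fun u => k * u ^ (2*H - 1) / Z u) (Ioc 0 t)) ∧
    (∀ t : ℝ, 0 ≤ t → Z t = ρ + B t + ∫ u in Ioc (0:ℝ) t, k * u ^ (2*H - 1) / Z u)

lemma bessel_aux_le (H ρ k : ℝ) (hk : 0 < k) (B : ℝ → ℝ) (Z₁ Z₂ : ℝ → ℝ)
    (h₁ : IsBesselTypeSol H ρ k B Z₁) (h₂ : IsBesselTypeSol H ρ k B Z₂) :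
    ∀ t : ℝ, 0 ≤ t → Z₁ t ≤ Z₂ t := by
  obtain ⟨hc₁, hnn₁, hpos₁, hint₁, heq₁⟩ := h₁
  obtain ⟨hc₂, hnn₂, hpos₂, hint₂, heq₂⟩ := h₂
  intro t ht
  by_contra hlt
  push_neg at hlt
  set f₁ := fun u : ℝ => k * u ^ (2*H - 1) / Z₁ u with hf₁
  set f₂ := fun u : ℝ => k * u ^ (2*H - 1) / Z₂ u with hf₂
  set D := fun u : ℝ => Z₁ u - Z₂ u with hDdef
  have hDc : Continuous D := hc₁.sub hc₂
  have hDt : 0 < D t := sub_pos.mpr hlt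
  have hD0 : D 0 = 0 := by
    have e1 := heq₁ 0 le_rfl
    have e2 := heq₂ 0 le_rfl
    simp only [Ioc_self, Measure.restrict_empty, integral_zero_measure] at e1 e2
    simp [hDdef, e1, e2]
  set S := Icc (0:ℝ) t ∩ {u | D u ≤ 0} with hSdef
  have h0S : (0:ℝ) ∈ S := ⟨⟨le_rfl, ht⟩, hD0.le⟩
  have hSne : S.Nonempty := ⟨0, h0S⟩
  have hSbdd : BddAbove S := ⟨t, fun u hu => hu.1.2⟩
  have hSclosed : IsClosed S := isClosed_Icc.inter (isClosed_le hDc continuous_const)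
  set s := sSup S with hsdef
  have hsS : s ∈ S := hSclosed.csSup_mem hSne hSbdd
  have hs0 : 0 ≤ s := hsS.1.1
  have hst : s ≤ t := hsS.1.2
  have hDs : D s ≤ 0 := hsS.2
  have hslt : s < t := lt_of_le_of_ne hst (fun h => absurd hDt (not_lt.mpr (h ▸ hDs)))
  -- On Ioc s t, D > 0
  have hDpos : ∀ u ∈ Ioc s t, 0 < D u := by
    intro u hu
    by_contra hle
    push_neg at hle
    have : u ∈ S := ⟨⟨hs0.trans hu.1.le, hu.2⟩, hle⟩
    exact absurd (le_csSup hSbdd this) (not_le.mpr hu.1)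
  -- Integrability
  have hi₁t : IntegrableOn f₁ (Ioc 0 t) := hint₁ t ht
  have hi₂t : IntegrableOn f₂ (Ioc 0 t) := hint₂ t ht
  have hsub1 : Ioc (0:ℝ) s ⊆ Ioc 0 t := Ioc_subset_Ioc_right hst
  have hsub2 : Ioc s t ⊆ Ioc 0 t := Ioc_subset_Ioc_left hs0
  have hi₁s : IntegrableOn f₁ (Ioc 0 s) := hi₁t.mono_set hsub1
  have hi₂s : IntegrableOn f₂ (Ioc 0 s) := hi₂t.mono_set hsub1
  have hi₁st : IntegrableOn f₁ (Ioc s t) := hi₁t.mono_set hsub2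
  have hi₂st : IntegrableOn f₂ (Ioc s t) := hi₂t.mono_set hsub2
  -- Additivity of the integral
  have hadd₁ : (∫ u in Ioc (0:ℝ) t, f₁ u) =
      (∫ u in Ioc (0:ℝ) s, f₁ u) + ∫ u in Ioc s t, f₁ u := by
    rw [← setIntegral_union (Set.Ioc_disjoint_Ioc_of_le le_rfl) measurableSet_Ioc hi₁s hi₁st,
      Ioc_union_Ioc_eq_Ioc hs0 hst]
  have hadd₂ : (∫ u in Ioc (0:ℝ) t, f₂ u) =
      (∫ u in Ioc (0:ℝ) s, f₂ u) + ∫ u in Ioc s t, f₂ u := by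
    rw [← setIntegral_union (Set.Ioc_disjoint_Ioc_of_le le_rfl) measurableSet_Ioc hi₂s hi₂st,
      Ioc_union_Ioc_eq_Ioc hs0 hst]
  have key : D t - D s = ∫ u in Ioc s t, (f₁ u - f₂ u) := by
    rw [integral_sub hi₁st hi₂st]
    have e1t := heq₁ t ht
    have e2t := heq₂ t ht
    have e1s := heq₁ s hs0
    have e2s := heq₂ s hs0
    simp only [hDdef, e1t, e2t, e1s, e2s, hadd₁, hadd₂]
    ring
  -- The integrand is a.e. nonpositive on Ioc s t
  have hae : ∀ᵐ u ∂(volume.restrict (Ioc s t)), f₁ u - f₂ u ≤ 0 := by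
    have hsubIoi : Ioc s t ⊆ Ioi (0:ℝ) := fun u hu => lt_of_le_of_lt hs0 hu.1
    have h1 : ∀ᵐ u ∂(volume.restrict (Ioc s t)), 0 < Z₁ u :=
      ae_restrict_of_ae_restrict_of_subset hsubIoi hpos₁
    have h2 : ∀ᵐ u ∂(volume.restrict (Ioc s t)), 0 < Z₂ u :=
      ae_restrict_of_ae_restrict_of_subset hsubIoi hpos₂
    have hmem : ∀ᵐ u ∂(volume.restrict (Ioc s t)), u ∈ Ioc s t :=
      ae_restrict_mem measurableSet_Ioc
    filter_upwards [h1, h2, hmem] with u hz1 hz2 hu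
    have hu0 : 0 < u := hsubIoi hu
    have hZ : Z₂ u ≤ Z₁ u := by
      have := hDpos u hu
      simp only [hDdef] at this
      linarith
    have hnum : 0 ≤ k * u ^ (2*H - 1) :=
      mul_nonneg hk.le (Real.rpow_nonneg hu0.le _)
    have : f₁ u ≤ f₂ u := by
      simp only [hf₁, hf₂]
      gcongr
    linarith
  have hIneg : (∫ u in Ioc s t, (f₁ u - f₂ u)) ≤ 0 :=
    integral_nonpos_of_ae hae
  linarith [key, hDs, hDt, hIneg]

/-- McKean-type uniqueness: for `H ∈ (1/2,1)`, `ρ ≥ 0`, `k > 0` and `B` continuous with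
`B_0 = 0`, the equation `Z_t = ρ + B_t + ∫₀^t k u^{2H-1}/Z_u du` has at most one
nonnegative continuous solution. -/
theorem bessel_type_equation_uniqueness
    (H : ℝ) (hH : H ∈ Set.Ioo (1/2 : ℝ) 1) (ρ k : ℝ) (hρ : 0 ≤ ρ) (hk : 0 < k)
    (B : ℝ → ℝ) (hB : Continuous B) (hB0 : B 0 = 0)
    (Z₁ Z₂ : ℝ → ℝ)
    (h₁ : IsBesselTypeSol H ρ k B Z₁) (h₂ : IsBesselTypeSol H ρ k B Z₂) :
    ∀ t : ℝ, 0 ≤ t → Z₁ t = Z₂ t := by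
  intro t ht
  exact le_antisymm (bessel_aux_le H ρ k hk B Z₁ Z₂ h₁ h₂ t ht)
    (bessel_aux_le H ρ k hk B Z₂ Z₁ h₂ h₁ t ht)
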